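/- Let a, b be real, A, B, C ≥ 0, and n a nonnegative integer. Then for every real α ∈ [-b², a²], |d^n/dα^n (Cos(A²α)·Cos(B²α)·Cos(-C²α))| ≤ (n!·(A+B+C)^{2n}/(2n)!)·cosh(Ab)·cosh(Bb)·cosh(Ca). -/

import Mathlib

noncomputable def RCos (ξ : ℝ) : ℝ := ∑' k : ℕ, (-ξ) ^ k / (Nat.factorial (2 * k))

namespace Stmt18
open Real Finset intervalIntegral MeasureTheory ENNReal

noncomputable def cf (n k : ℕ) : ℝ :=
  (Nat.factorial (k + n)) / ((Nat.factorial k) * (Nat.factorial (2 * (k + n))))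

noncomputable def E (n : ℕ) (ξ : ℝ) : ℝ := ∑' k : ℕ, (-ξ) ^ k * cf n k

lemma cf_nonneg (n k : ℕ) : 0 ≤ cf n k := by
  unfold cf; positivity

lemma cf_le (n k : ℕ) : cf n k ≤ 1 / ((Nat.factorial k) * (Nat.factorial k)) := by
  unfold cf
  rw [div_le_div_iff₀ (by positivity) (by positivity), one_mul]
  have h1 : (Nat.factorial (k + n)) * (Nat.factorial (k + n)) ≤ Nat.factorial (2 * (k + n)) := by
    have := Nat.factorial_mul_factorial_dvd_factorial_add (k + n) (k + n)
    rw [two_mul]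
    exact Nat.le_of_dvd (Nat.factorial_pos _) this
  have h2 : Nat.factorial k ≤ Nat.factorial (k + n) := Nat.factorial_le (Nat.le_add_right _ _)
  have : Nat.factorial (k+n) * (Nat.factorial k * Nat.factorial k) ≤
      Nat.factorial k * Nat.factorial (2 * (k+n)) := by
    calc Nat.factorial (k+n) * (Nat.factorial k * Nat.factorial k)
        = Nat.factorial k * (Nat.factorial (k+n) * Nat.factorial k) := by ring
      _ ≤ Nat.factorial k * (Nat.factorial (k+n) * Nat.factorial (k+n)) := by
          exact Nat.mul_le_mul_left _ (Nat.mul_le_mul_left _ h2)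
      _ ≤ Nat.factorial k * Nat.factorial (2 * (k+n)) := Nat.mul_le_mul_left _ h1
  exact_mod_cast this

lemma cf_succ (n k : ℕ) : ((k : ℝ) + 1) * cf n (k + 1) = cf (n + 1) k := by
  unfold cf
  have h1 : k + 1 + n = k + (n + 1) := by omega
  rw [h1, Nat.factorial_succ]
  have h2 : (Nat.factorial k : ℝ) ≠ 0 := by positivity
  have h3 : (Nat.factorial (2 * (k + (n+1))) : ℝ) ≠ 0 := by positivity
  push_cast
  field_simp

lemma RCos_eq : RCos = E 0 := by
  funext ξ
  unfold RCos E cf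
  congr 1
  funext k
  rw [Nat.add_zero]
  have h2 : (Nat.factorial k : ℝ) ≠ 0 := by positivity
  have h3 : (Nat.factorial (2 * k) : ℝ) ≠ 0 := by positivity
  field_simp


lemma deriv_bound (n k : ℕ) {y R : ℝ} (hR : 1 ≤ R) (hy : |y| ≤ R) :
    ‖-((k : ℝ) * (-y) ^ (k - 1) * cf n k)‖ ≤ (2 * R) ^ k / Nat.factorial k := by
  have h0 : (0:ℝ) < R := lt_of_lt_of_le one_pos hR
  rw [norm_neg, norm_mul, norm_mul]
  have h1 : ‖((k:ℕ):ℝ)‖ ≤ (2:ℝ)^k := by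
    rw [Real.norm_natCast]
    exact_mod_cast (Nat.lt_two_pow_self (n := k)).le
  have h2 : ‖(-y) ^ (k-1)‖ ≤ R ^ k := by
    rw [norm_pow, norm_neg]
    calc ‖y‖ ^ (k-1) ≤ R ^ (k-1) := by
          apply pow_le_pow_left₀ (norm_nonneg _) hy
      _ ≤ R ^ k := pow_le_pow_right₀ hR (Nat.sub_le _ _)
  have h3 : ‖cf n k‖ ≤ 1 / Nat.factorial k := by
    rw [Real.norm_eq_abs, abs_of_nonneg (cf_nonneg n k)]
    calc cf n k ≤ 1 / ((Nat.factorial k) * (Nat.factorial k)) := cf_le n k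
      _ ≤ 1 / Nat.factorial k := by
          apply div_le_div_of_nonneg_left one_pos.le (by positivity)
          exact_mod_cast Nat.le_mul_of_pos_left _ (Nat.factorial_pos _)
  calc ‖((k:ℕ):ℝ)‖ * ‖(-y)^(k-1)‖ * ‖cf n k‖ ≤ (2:ℝ)^k * R^k * (1 / Nat.factorial k) := by
        gcongr
    _ = (2*R)^k / Nat.factorial k := by rw [mul_pow]; ring

lemma hasDerivAt_term (n k : ℕ) (x : ℝ) :
    HasDerivAt (fun x : ℝ => (-x) ^ k * cf n k) (-((k : ℝ) * (-x) ^ (k - 1) * cf n k)) x := by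
  have h := ((hasDerivAt_pow k (-x)).comp x (hasDerivAt_neg x)).mul_const (cf n k)
  have e : ((k:ℝ) * (-x) ^ (k - 1) * -1) * cf n k = -((k : ℝ) * (-x) ^ (k - 1) * cf n k) := by ring
  exact e ▸ h

lemma hasDerivAt_E (n : ℕ) (ξ : ℝ) : HasDerivAt (E n) (-(E (n + 1) ξ)) ξ := by
  set R : ℝ := |ξ| + 1 with hRdef
  have hR1 : 1 ≤ R := le_add_of_nonneg_left (abs_nonneg ξ)
  have hR0 : (0:ℝ) < R := lt_of_lt_of_le one_pos hR1
  have hu : Summable (fun k : ℕ => (2*R)^k / Nat.factorial k) :=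
    Real.summable_pow_div_factorial (2*R)
  have key : HasDerivAt (fun z => ∑' k : ℕ, (-z) ^ k * cf n k)
      (∑' k : ℕ, -((k : ℝ) * (-ξ) ^ (k - 1) * cf n k)) ξ := by
    apply hasDerivAt_tsum_of_isPreconnected hu Metric.isOpen_ball
      (convex_ball (0:ℝ) R).isPreconnected
      (fun k y _ => hasDerivAt_term n k y)
      (fun k y hy => deriv_bound n k hR1 (le_of_lt (by simpa [Real.dist_eq] using hy)))
      (Metric.mem_ball_self hR0)
      ?_ (by simpa [Real.dist_eq, hRdef] using lt_add_one |ξ|)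
    · apply summable_of_ne_finset_zero (s := {0})
      intro k hk
      simp only [Finset.mem_singleton] at hk
      rw [neg_zero, zero_pow hk, zero_mul]
  have hsum : Summable (fun k : ℕ => (k : ℝ) * (-ξ) ^ (k - 1) * cf n k) := by
    have := Summable.of_norm_bounded hu
      (fun k => deriv_bound n k (y := ξ) hR1 ((lt_add_one |ξ|).le))
    simpa using this.neg
  have : (∑' k : ℕ, -((k : ℝ) * (-ξ) ^ (k - 1) * cf n k)) = -(E (n+1) ξ) := by
    rw [tsum_neg]
    congr 1
    rw [Summable.tsum_eq_zero_add hsum]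
    simp only [Nat.cast_zero, zero_mul, zero_add, Nat.add_sub_cancel]
    unfold E
    congr 1
    funext k
    push_cast
    rw [← cf_succ n k]
    ring
  rw [this] at key
  exact key


lemma differentiable_E (n : ℕ) : Differentiable ℝ (E n) :=
  fun ξ => (hasDerivAt_E n ξ).differentiableAt

lemma deriv_E (n : ℕ) : deriv (E n) = fun ξ => -(E (n + 1) ξ) := by
  funext ξ; exact (hasDerivAt_E n ξ).deriv

lemma iteratedDeriv_E (m n : ℕ) :
    iteratedDeriv m (E n) = fun ξ => (-1 : ℝ) ^ m * E (n + m) ξ := by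
  induction m generalizing n with
  | zero => funext ξ; simp
  | succ m ih =>
    rw [iteratedDeriv_succ, ih n]
    funext ξ
    rw [deriv_const_mul _ ((differentiable_E (n+m)) ξ)]
    rw [show deriv (fun ξ => E (n+m) ξ) ξ = deriv (E (n+m)) ξ from rfl, deriv_E]
    have : n + (m+1) = n + m + 1 := by omega
    rw [this]
    ring

lemma contDiff_E (n : ℕ) : ContDiff ℝ (⊤ : ℕ∞) (E n) := by
  apply contDiff_of_differentiable_iteratedDeriv
  intro m _
  rw [iteratedDeriv_E]
  exact (differentiable_E (n + m)).const_mul _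

lemma contDiff_E_scaled (c : ℝ) : ContDiff ℝ (⊤ : ℕ∞) (fun x : ℝ => E 0 (c * x)) :=
  (contDiff_E 0).comp (contDiff_const.mul contDiff_id)

lemma iteratedDeriv_E_scaled (c : ℝ) (m : ℕ) (x : ℝ) :
    iteratedDeriv m (fun x : ℝ => E 0 (c * x)) x = c ^ m * ((-1 : ℝ) ^ m * E m (c * x)) := by
  rw [iteratedDeriv_comp_const_mul ((contDiff_E 0).of_le (by exact_mod_cast le_top)) c, iteratedDeriv_E m 0]
  simp


lemma E_zero_eq_cos {ξ : ℝ} (h : 0 ≤ ξ) : E 0 ξ = Real.cos (Real.sqrt ξ) := by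
  unfold E cf
  rw [Real.cos_eq_tsum]
  congr 1; funext k
  have h1 : (Real.sqrt ξ) ^ (2*k) = ξ ^ k := by rw [pow_mul, Real.sq_sqrt h]
  have h2 : (Nat.factorial k : ℝ) ≠ 0 := by positivity
  have h3 : (Nat.factorial (2*k) : ℝ) ≠ 0 := by positivity
  rw [h1, Nat.add_zero, neg_pow]
  field_simp

lemma E_zero_eq_cosh {ξ : ℝ} (h : ξ ≤ 0) : E 0 ξ = Real.cosh (Real.sqrt (-ξ)) := by
  unfold E cf
  rw [Real.cosh_eq_tsum]
  congr 1; funext k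
  have h1 : (Real.sqrt (-ξ)) ^ (2*k) = (-ξ) ^ k := by
    rw [pow_mul, Real.sq_sqrt (by linarith)]
  have h2 : (Nat.factorial k : ℝ) ≠ 0 := by positivity
  have h3 : (Nat.factorial (2*k) : ℝ) ≠ 0 := by positivity
  rw [h1, Nat.add_zero]
  field_simp

lemma abs_E_zero_le {ξ u : ℝ} (h : -u^2 ≤ ξ) : |E 0 ξ| ≤ Real.cosh u := by
  rcases le_or_gt 0 ξ with hξ | hξ
  · rw [E_zero_eq_cos hξ]
    exact (Real.abs_cos_le_one _).trans (Real.one_le_cosh u)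
  · rw [E_zero_eq_cosh hξ.le, abs_of_pos (Real.cosh_pos _)]
    rw [Real.cosh_le_cosh]
    rw [abs_of_nonneg (Real.sqrt_nonneg _)]
    calc Real.sqrt (-ξ) ≤ Real.sqrt (u^2) := Real.sqrt_le_sqrt (by linarith)
      _ = |u| := Real.sqrt_sq_eq_abs u

lemma moment (n : ℕ) : ∀ k : ℕ, (∫ s in (0:ℝ)..1, s^(2*k) * (1-s^2)^n)
    = ((4:ℝ)^(n+1) * (Nat.factorial n : ℝ) * (Nat.factorial (2*k) : ℝ)
        * (Nat.factorial (k+n+1) : ℝ)) /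
      (2 * (Nat.factorial k : ℝ) * (Nat.factorial (2*(k+n+1)) : ℝ)) := by
  induction n with
  | zero =>
    intro k
    have h0 : (∫ s in (0:ℝ)..1, s^(2*k) * (1-s^2)^0) = ∫ s in (0:ℝ)..1, s^(2*k) := by
      simp
    rw [h0, integral_pow]
    have h1 : k + 0 + 1 = k + 1 := by omega
    have h2 : 2 * (k + 0 + 1) = 2*k + 1 + 1 := by omega
    rw [h1, h2, Nat.factorial_succ (2*k+1), Nat.factorial_succ (2*k), Nat.factorial_succ k, Nat.factorial_zero]
    have h3 : (Nat.factorial k : ℝ) ≠ 0 := by positivity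
    have h4 : (Nat.factorial (2*k) : ℝ) ≠ 0 := by positivity
    push_cast
    rw [div_eq_div_iff (by positivity) (by positivity)]
    ring
  | succ n ih =>
    intro k
    have hderiv : ∀ s : ℝ, HasDerivAt (fun s : ℝ => s^(2*k+1) * (1-s^2)^(n+1))
        (((2*(k:ℝ)+1) : ℝ) * (s^(2*k) * (1-s^2)^(n+1))
          - (2*((n:ℝ)+1)) * (s^(2*(k+1)) * (1-s^2)^n)) s := by
      intro s
      have h1 : HasDerivAt (fun s : ℝ => 1 - s^2) (-(2*s)) s := by
        simpa using (hasDerivAt_pow 2 s).const_sub 1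
      have h2 : HasDerivAt (fun s : ℝ => (1-s^2)^(n+1)) _ s := h1.pow (n+1)
      have h3 : HasDerivAt (fun s : ℝ => s^(2*k+1) * (1-s^2)^(n+1)) _ s :=
        (hasDerivAt_pow (2*k+1) s).mul h2
      simp only [Nat.add_sub_cancel] at h2 h3
      convert h3 using 1
      push_cast
      ring
    have hc1 : Continuous fun s : ℝ => s^(2*k) * (1-s^2)^(n+1) := by fun_prop
    have hc2 : Continuous fun s : ℝ => s^(2*(k+1)) * (1-s^2)^n := by fun_prop
    have hint : (∫ s in (0:ℝ)..1, ((2*(k:ℝ)+1) * (s^(2*k) * (1-s^2)^(n+1))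
        - (2*((n:ℝ)+1)) * (s^(2*(k+1)) * (1-s^2)^n))) = 0 := by
      rw [integral_eq_sub_of_hasDerivAt (fun s _ => hderiv s)
        (((continuous_const.mul hc1).sub (continuous_const.mul hc2)).intervalIntegrable 0 1)]
      norm_num
    rw [integral_sub ((hc1.const_mul (2*(k:ℝ)+1)).intervalIntegrable 0 1)
        ((hc2.const_mul (2*((n:ℝ)+1))).intervalIntegrable 0 1),
      intervalIntegral.integral_const_mul, intervalIntegral.integral_const_mul, sub_eq_zero] at hint
    have h5 : ((2*(k:ℝ)+1) : ℝ) ≠ 0 := by positivity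
    have hI : (∫ s in (0:ℝ)..1, s^(2*k) * (1-s^2)^(n+1))
        = (2*((n:ℝ)+1)) / ((2*(k:ℝ)+1) : ℝ) * (∫ s in (0:ℝ)..1, s^(2*(k+1)) * (1-s^2)^n) := by
      rw [div_mul_eq_mul_div, eq_div_iff h5]
      linarith [hint]
    rw [hI, ih (k+1)]
    have e1 : k + 1 + n + 1 = k + (n+1) + 1 := by omega
    rw [e1]
    have h3 : (Nat.factorial k : ℝ) ≠ 0 := by positivity
    have h4 : (Nat.factorial (2*k) : ℝ) ≠ 0 := by positivity
    have h6 : (Nat.factorial (2*(k+(n+1)+1)) : ℝ) ≠ 0 := by positivity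
    rw [show 2*(k+1) = 2*k+1+1 by omega, Nat.factorial_succ (2*k+1), Nat.factorial_succ (2*k),
      Nat.factorial_succ k, Nat.factorial_succ n]
    push_cast
    field_simp
    ring

lemma continuous_E (n : ℕ) : Continuous (E n) := (differentiable_E n).continuous

lemma E_rep (n : ℕ) (ξ : ℝ) :
    E (n+1) ξ = (2 / ((4:ℝ)^(n+1) * (Nat.factorial n : ℝ))) *
      ∫ s in (0:ℝ)..1, (1-s^2)^n * E 0 (s^2*ξ) := by
  have hfc : ∀ k : ℕ, Continuous (fun s : ℝ => (1-s^2)^n * ((-(s^2*ξ))^k * cf 0 k)) := by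
    intro k; fun_prop
  have hw : Summable (fun k : ℕ => |ξ|^k * cf 0 k) := by
    apply Summable.of_nonneg_of_le
      (fun k => mul_nonneg (pow_nonneg (abs_nonneg ξ) k) (cf_nonneg 0 k))
      (fun k => ?_) (Real.summable_pow_div_factorial |ξ|)
    have h1 : cf 0 k ≤ 1 / (Nat.factorial k) := by
      refine (cf_le 0 k).trans ?_
      apply one_div_le_one_div_of_le (by positivity)
      exact_mod_cast Nat.le_mul_of_pos_left _ (Nat.factorial_pos _)
    calc |ξ|^k * cf 0 k ≤ |ξ|^k * (1 / (Nat.factorial k)) := by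
          apply mul_le_mul_of_nonneg_left h1 (by positivity)
      _ = |ξ|^k / (Nat.factorial k) := by rw [mul_one_div]
  have hEq : (fun s : ℝ => (1-s^2)^n * E 0 (s^2*ξ))
      = fun s : ℝ => ∑' k : ℕ, (1-s^2)^n * ((-(s^2*ξ))^k * cf 0 k) := by
    funext s
    simp only [E]
    rw [← _root_.tsum_mul_left]
  rw [hEq, intervalIntegral.integral_of_le zero_le_one]
  rw [MeasureTheory.integral_tsum (fun k => (hfc k).aestronglyMeasurable) ?_]
  · have hterm : ∀ k : ℕ, (∫ s in Set.Ioc (0:ℝ) 1, (1-s^2)^n * ((-(s^2*ξ))^k * cf 0 k))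
        = ((-ξ)^k * cf 0 k) * ∫ s in (0:ℝ)..1, s^(2*k) * (1-s^2)^n := by
      intro k
      rw [← intervalIntegral.integral_of_le zero_le_one, ← intervalIntegral.integral_const_mul]
      congr 1
      funext s
      rw [show -(s^2*ξ) = s^2 * (-ξ) from by ring, mul_pow, ← pow_mul]
      ring
    rw [← _root_.tsum_mul_left]
    simp only [E]
    apply tsum_congr
    intro k
    rw [hterm k, moment n k]
    unfold cf
    rw [Nat.add_zero, show k + (n+1) = k+n+1 from by omega]
    have h2 : (Nat.factorial k : ℝ) ≠ 0 := by positivity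
    have h3 : (Nat.factorial (2*k) : ℝ) ≠ 0 := by positivity
    have h4 : (Nat.factorial n : ℝ) ≠ 0 := by positivity
    have h5 : (Nat.factorial (2*(k+n+1)) : ℝ) ≠ 0 := by positivity
    field_simp
    ring
  · have hb : ∀ k : ℕ, (∫⁻ s in Set.Ioc (0:ℝ) 1,
        ‖(1-s^2)^n * ((-(s^2*ξ))^k * cf 0 k)‖₊) ≤ ENNReal.ofReal (|ξ|^k * cf 0 k) := by
      intro k
      have hpt : ∀ s ∈ Set.Ioc (0:ℝ) 1,
          (‖(1-s^2)^n * ((-(s^2*ξ))^k * cf 0 k)‖₊ : ℝ≥0∞) ≤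
            ENNReal.ofReal (|ξ|^k * cf 0 k) := by
        intro s hs
        rw [← enorm_eq_nnnorm, Real.enorm_eq_ofReal_abs]
        apply ENNReal.ofReal_le_ofReal
        obtain ⟨hs1, hs2⟩ := hs
        calc |(1-s^2)^n * ((-(s^2*ξ))^k * cf 0 k)|
            = |1-s^2|^n * (|s^2*ξ|^k * cf 0 k) := by
              rw [abs_mul, abs_mul, abs_pow, abs_pow, abs_neg, abs_of_nonneg (cf_nonneg 0 k)]
          _ ≤ 1^n * (|ξ|^k * cf 0 k) := by
              have e1 : |1-s^2| ≤ 1 := by rw [abs_le]; constructor <;> nlinarith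
              have e2 : |s^2*ξ| ≤ |ξ| := by
                rw [abs_mul, abs_of_nonneg (sq_nonneg s)]
                nlinarith [mul_nonneg (by nlinarith : (0:ℝ) ≤ 1 - s^2) (abs_nonneg ξ)]
              have e3 : |s^2*ξ|^k ≤ |ξ|^k := pow_le_pow_left₀ (abs_nonneg _) e2 k
              exact mul_le_mul (pow_le_pow_left₀ (abs_nonneg _) e1 n)
                (mul_le_mul_of_nonneg_right e3 (cf_nonneg 0 k))
                (mul_nonneg (pow_nonneg (abs_nonneg _) _) (cf_nonneg 0 k))
                (by positivity)
          _ = |ξ|^k * cf 0 k := by rw [one_pow, one_mul]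
      calc (∫⁻ s in Set.Ioc (0:ℝ) 1, ‖(1-s^2)^n * ((-(s^2*ξ))^k * cf 0 k)‖₊)
          ≤ ∫⁻ _ in Set.Ioc (0:ℝ) 1, ENNReal.ofReal (|ξ|^k * cf 0 k) :=
            setLIntegral_mono measurable_const hpt
        _ = ENNReal.ofReal (|ξ|^k * cf 0 k) := by
            rw [setLIntegral_const, Real.volume_Ioc]
            simp
    apply ne_of_lt
    calc (∑' k : ℕ, ∫⁻ s in Set.Ioc (0:ℝ) 1, ‖(1-s^2)^n * ((-(s^2*ξ))^k * cf 0 k)‖₊)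
        ≤ ∑' k : ℕ, ENNReal.ofReal (|ξ|^k * cf 0 k) := ENNReal.tsum_le_tsum hb
      _ = ENNReal.ofReal (∑' k : ℕ, |ξ|^k * cf 0 k) := (ENNReal.ofReal_tsum_of_nonneg
            (fun k => mul_nonneg (pow_nonneg (abs_nonneg ξ) k) (cf_nonneg 0 k)) hw).symm
      _ < ⊤ := ENNReal.ofReal_lt_top

lemma abs_E_le (n : ℕ) {ξ u : ℝ} (h : -u^2 ≤ ξ) :
    |E n ξ| ≤ ((Nat.factorial n : ℝ) / (Nat.factorial (2*n) : ℝ)) * Real.cosh u := by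
  cases n with
  | zero => simpa using abs_E_zero_le h
  | succ n =>
    rw [E_rep]
    have hK : (0:ℝ) ≤ 2 / ((4:ℝ)^(n+1) * (Nat.factorial n : ℝ)) := by positivity
    have hcont : Continuous (fun s : ℝ => (1-s^2)^n * E 0 (s^2*ξ)) := by
      have := continuous_E 0
      fun_prop
    rw [abs_mul, abs_of_nonneg hK]
    have hbound : |∫ s in (0:ℝ)..1, (1-s^2)^n * E 0 (s^2*ξ)|
        ≤ Real.cosh u * ∫ s in (0:ℝ)..1, s^(2*0) * (1-s^2)^n := by
      rw [← intervalIntegral.integral_const_mul]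
      calc |∫ s in (0:ℝ)..1, (1-s^2)^n * E 0 (s^2*ξ)|
          ≤ ∫ s in (0:ℝ)..1, |(1-s^2)^n * E 0 (s^2*ξ)| :=
            intervalIntegral.abs_integral_le_integral_abs zero_le_one
        _ ≤ ∫ s in (0:ℝ)..1, Real.cosh u * (s^(2*0) * (1-s^2)^n) := by
            apply intervalIntegral.integral_mono_on zero_le_one
              (hcont.abs.intervalIntegrable 0 1)
              ((continuous_const.mul (by fun_prop)).intervalIntegrable 0 1)
            intro s hs
            obtain ⟨hs1, hs2⟩ := hs
            have h1 : (0:ℝ) ≤ 1 - s^2 := by nlinarith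
            have h2 : -u^2 ≤ s^2*ξ := by
              rcases le_or_gt 0 ξ with hξ | hξ
              · nlinarith [sq_nonneg u, sq_nonneg s]
              · nlinarith [sq_nonneg s]
            calc |(1-s^2)^n * E 0 (s^2*ξ)| = (1-s^2)^n * |E 0 (s^2*ξ)| := by
                  rw [abs_mul, abs_pow, abs_of_nonneg h1]
              _ ≤ (1-s^2)^n * Real.cosh u := by
                  apply mul_le_mul_of_nonneg_left (abs_E_zero_le h2) (by positivity)
              _ = Real.cosh u * (s^(2*0) * (1-s^2)^n) := by
                  rw [mul_zero, pow_zero, one_mul]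
                  ring
    calc (2 / ((4:ℝ)^(n+1) * (Nat.factorial n : ℝ))) * |∫ s in (0:ℝ)..1, (1-s^2)^n * E 0 (s^2*ξ)|
        ≤ (2 / ((4:ℝ)^(n+1) * (Nat.factorial n : ℝ)))
            * (Real.cosh u * ∫ s in (0:ℝ)..1, s^(2*0) * (1-s^2)^n) := by
          apply mul_le_mul_of_nonneg_left hbound hK
      _ = ((Nat.factorial (n+1) : ℝ) / (Nat.factorial (2*(n+1)) : ℝ)) * Real.cosh u := by
          rw [moment n 0]
          have h2 : (Nat.factorial n : ℝ) ≠ 0 := by positivity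
          have h5 : (Nat.factorial (2*(0+n+1)) : ℝ) ≠ 0 := by positivity
          simp only [Nat.factorial_zero, Nat.zero_add, Nat.mul_zero]
          field_simp


lemma even_binom (x y : ℝ) (hx : 0 ≤ x) (hy : 0 ≤ y) (m : ℕ) :
    ∑ i ∈ range (m+1), ((Nat.choose (2*m) (2*i)) : ℝ) * x^(2*i) * y^(2*(m-i))
      ≤ (x+y)^(2*m) := by
  rw [add_pow]
  have h1 : ∑ i ∈ range (m+1), ((Nat.choose (2*m) (2*i)) : ℝ) * x^(2*i) * y^(2*(m-i))
      = ∑ p ∈ (range (m+1)).image (fun i => 2*i),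
          x^p * y^(2*m-p) * (Nat.choose (2*m) p : ℝ) := by
    rw [Finset.sum_image (fun a _ b _ h => by omega)]
    apply Finset.sum_congr rfl
    intro i hi
    have hi' : i ≤ m := by simpa [Nat.lt_succ_iff] using hi
    rw [show 2*(m-i) = 2*m - 2*i from by omega]
    ring
  rw [h1]
  apply Finset.sum_le_sum_of_subset_of_nonneg
  · intro p hp
    simp only [Finset.mem_image, Finset.mem_range] at hp ⊢
    omega
  · intro p _ _
    positivity

lemma tri_factorial (n i j : ℕ) (hin : i ≤ n) (hji : j ≤ i) :
    (Nat.choose n i) * (Nat.choose i j) *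
      (Nat.factorial j * Nat.factorial (i-j) * Nat.factorial (n-i)) = Nat.factorial n := by
  calc (Nat.choose n i) * (Nat.choose i j) *
        (Nat.factorial j * Nat.factorial (i-j) * Nat.factorial (n-i))
      = (Nat.choose i j * Nat.factorial j * Nat.factorial (i-j)) *
          (Nat.choose n i * Nat.factorial (n-i)) := by ring
    _ = Nat.factorial i * (Nat.choose n i * Nat.factorial (n-i)) := by
        rw [Nat.choose_mul_factorial_mul_factorial hji]
    _ = Nat.choose n i * Nat.factorial i * Nat.factorial (n-i) := by ring
    _ = Nat.factorial n := Nat.choose_mul_factorial_mul_factorial hin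

lemma key_term (n i j : ℕ) (hin : i ≤ n) (hji : j ≤ i) (A B C : ℝ) :
    (Nat.choose n i : ℝ) * (Nat.choose i j : ℝ) *
        (A^(2*j) * ((Nat.factorial j : ℝ) / (Nat.factorial (2*j) : ℝ))) *
        (B^(2*(i-j)) * ((Nat.factorial (i-j) : ℝ) / (Nat.factorial (2*(i-j)) : ℝ))) *
        (C^(2*(n-i)) * ((Nat.factorial (n-i) : ℝ) / (Nat.factorial (2*(n-i)) : ℝ)))
      = ((Nat.factorial n : ℝ) / (Nat.factorial (2*n) : ℝ)) *
          ((Nat.choose (2*n) (2*i) : ℝ) *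
            ((Nat.choose (2*i) (2*j) : ℝ) * A^(2*j) * B^(2*(i-j))) * C^(2*(n-i))) := by
  have l1 := tri_factorial n i j hin hji
  have l2 : (Nat.choose (2*n) (2*i)) * (Nat.choose (2*i) (2*j)) *
      (Nat.factorial (2*j) * Nat.factorial (2*(i-j)) * Nat.factorial (2*(n-i)))
      = Nat.factorial (2*n) := by
    have := tri_factorial (2*n) (2*i) (2*j) (by omega) (by omega)
    rw [show 2*i - 2*j = 2*(i-j) from by omega, show 2*n - 2*i = 2*(n-i) from by omega] at this
    exact this
  have c1 : ((Nat.choose n i : ℝ)) * (Nat.choose i j : ℝ) *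
      ((Nat.factorial j : ℝ) * (Nat.factorial (i-j) : ℝ) * (Nat.factorial (n-i) : ℝ))
      = (Nat.factorial n : ℝ) := by exact_mod_cast congrArg (Nat.cast (R := ℝ)) l1
  have c2 : ((Nat.choose (2*n) (2*i) : ℝ)) * (Nat.choose (2*i) (2*j) : ℝ) *
      ((Nat.factorial (2*j) : ℝ) * (Nat.factorial (2*(i-j)) : ℝ) * (Nat.factorial (2*(n-i)) : ℝ))
      = (Nat.factorial (2*n) : ℝ) := by exact_mod_cast congrArg (Nat.cast (R := ℝ)) l2
  have h1 : (Nat.factorial (2*j) : ℝ) ≠ 0 := by positivity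
  have h2 : (Nat.factorial (2*(i-j)) : ℝ) ≠ 0 := by positivity
  have h3 : (Nat.factorial (2*(n-i)) : ℝ) ≠ 0 := by positivity
  have h4 : (Nat.factorial (2*n) : ℝ) ≠ 0 := by positivity
  field_simp
  linear_combination (A^(2*j) * B^(2*(i-j)) * C^(2*(n-i)) * (Nat.factorial (2*n) : ℝ)) * c1
    - (A^(2*j) * B^(2*(i-j)) * C^(2*(n-i)) * (Nat.factorial n : ℝ)) * c2

lemma numeric (A B C : ℝ) (hA : 0 ≤ A) (hB : 0 ≤ B) (hC : 0 ≤ C) (n : ℕ) :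
    ∑ i ∈ range (n+1), ∑ j ∈ range (i+1),
      (Nat.choose n i : ℝ) * (Nat.choose i j : ℝ) *
        (A^(2*j) * ((Nat.factorial j : ℝ) / (Nat.factorial (2*j) : ℝ))) *
        (B^(2*(i-j)) * ((Nat.factorial (i-j) : ℝ) / (Nat.factorial (2*(i-j)) : ℝ))) *
        (C^(2*(n-i)) * ((Nat.factorial (n-i) : ℝ) / (Nat.factorial (2*(n-i)) : ℝ)))
      ≤ (Nat.factorial n : ℝ) * (A+B+C)^(2*n) / (Nat.factorial (2*n) : ℝ) := by
  calc ∑ i ∈ range (n+1), ∑ j ∈ range (i+1),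
        (Nat.choose n i : ℝ) * (Nat.choose i j : ℝ) *
          (A^(2*j) * ((Nat.factorial j : ℝ) / (Nat.factorial (2*j) : ℝ))) *
          (B^(2*(i-j)) * ((Nat.factorial (i-j) : ℝ) / (Nat.factorial (2*(i-j)) : ℝ))) *
          (C^(2*(n-i)) * ((Nat.factorial (n-i) : ℝ) / (Nat.factorial (2*(n-i)) : ℝ)))
      = ((Nat.factorial n : ℝ) / (Nat.factorial (2*n) : ℝ)) *
          ∑ i ∈ range (n+1), (Nat.choose (2*n) (2*i) : ℝ) *
            (∑ j ∈ range (i+1), (Nat.choose (2*i) (2*j) : ℝ) * A^(2*j) * B^(2*(i-j))) *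
            C^(2*(n-i)) := by
        rw [Finset.mul_sum]
        apply Finset.sum_congr rfl
        intro i hi
        have hin : i ≤ n := by simpa [Nat.lt_succ_iff] using hi
        rw [Finset.mul_sum, Finset.sum_mul, Finset.mul_sum]
        apply Finset.sum_congr rfl
        intro j hj
        have hji : j ≤ i := by simpa [Nat.lt_succ_iff] using hj
        rw [key_term n i j hin hji A B C]
    _ ≤ ((Nat.factorial n : ℝ) / (Nat.factorial (2*n) : ℝ)) *
          ∑ i ∈ range (n+1), (Nat.choose (2*n) (2*i) : ℝ) * (A+B)^(2*i) * C^(2*(n-i)) := by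
        apply mul_le_mul_of_nonneg_left _ (by positivity)
        apply Finset.sum_le_sum
        intro i hi
        have h := even_binom A B hA hB i
        have hnn : (0:ℝ) ≤ (Nat.choose (2*n) (2*i) : ℝ) := by positivity
        have hC' : (0:ℝ) ≤ C^(2*(n-i)) := by positivity
        exact mul_le_mul_of_nonneg_right (mul_le_mul_of_nonneg_left h hnn) hC'
    _ ≤ ((Nat.factorial n : ℝ) / (Nat.factorial (2*n) : ℝ)) * ((A+B)+C)^(2*n) := by
        apply mul_le_mul_of_nonneg_left (even_binom (A+B) C (by linarith) hC n) (by positivity)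
    _ = (Nat.factorial n : ℝ) * (A+B+C)^(2*n) / (Nat.factorial (2*n) : ℝ) := by ring


lemma factor_bound (c u : ℝ) (hc : 0 ≤ c) (m : ℕ) {x : ℝ} (h : -u^2 ≤ c*x) :
    ‖iteratedFDeriv ℝ m (fun x : ℝ => E 0 (c*x)) x‖ ≤
      c^m * (((Nat.factorial m : ℝ) / (Nat.factorial (2*m) : ℝ)) * Real.cosh u) := by
  rw [norm_iteratedFDeriv_eq_norm_iteratedDeriv, Real.norm_eq_abs, iteratedDeriv_E_scaled]
  calc |c^m * ((-1:ℝ)^m * E m (c*x))| = c^m * |E m (c*x)| := by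
        rw [abs_mul, abs_mul, abs_pow, abs_pow, abs_neg, abs_one, one_pow, one_mul,
          abs_of_nonneg hc]
    _ ≤ c^m * (((Nat.factorial m : ℝ) / (Nat.factorial (2*m) : ℝ)) * Real.cosh u) :=
        mul_le_mul_of_nonneg_left (abs_E_le m h) (by positivity)



end Stmt18

open Stmt18 Finset in
theorem stmt_18 (a b A B C : ℝ) (hA : 0 ≤ A) (hB : 0 ≤ B) (hC : 0 ≤ C) (n : ℕ)
    (α : ℝ) (hα : α ∈ Set.Icc (-b ^ 2) (a ^ 2)) :
    |iteratedDeriv n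
        (fun x : ℝ => RCos (A ^ 2 * x) * RCos (B ^ 2 * x) * RCos (-(C ^ 2) * x)) α| ≤
      (Nat.factorial n * (A + B + C) ^ (2 * n) / Nat.factorial (2 * n)) *
        Real.cosh (A * b) * Real.cosh (B * b) * Real.cosh (C * a) := by
  obtain ⟨hα1, hα2⟩ := hα
  rw [RCos_eq]
  have hfA : ContDiff ℝ (⊤ : ℕ∞) (fun x : ℝ => E 0 (A^2 * x)) := contDiff_E_scaled _
  have hfB : ContDiff ℝ (⊤ : ℕ∞) (fun x : ℝ => E 0 (B^2 * x)) := contDiff_E_scaled _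
  have hfC : ContDiff ℝ (⊤ : ℕ∞) (fun x : ℝ => E 0 (-(C^2) * x)) := contDiff_E_scaled _
  have hfAB : ContDiff ℝ (⊤ : ℕ∞) (fun x : ℝ => E 0 (A^2 * x) * E 0 (B^2 * x)) := hfA.mul hfB
  have hle : ∀ m : ℕ, (m : WithTop ℕ∞) ≤ ((⊤ : ℕ∞) : WithTop ℕ∞) := by
    intro m
    exact_mod_cast le_top
  -- bounds on the three factors
  have bA : ∀ m : ℕ, ‖iteratedFDeriv ℝ m (fun x : ℝ => E 0 (A^2 * x)) α‖ ≤
      (A^2)^m * (((Nat.factorial m : ℝ) / (Nat.factorial (2*m) : ℝ)) * Real.cosh (A*b)) := by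
    intro m
    exact factor_bound (A^2) (A*b) (sq_nonneg A) m (by nlinarith [sq_nonneg A])
  have bB : ∀ m : ℕ, ‖iteratedFDeriv ℝ m (fun x : ℝ => E 0 (B^2 * x)) α‖ ≤
      (B^2)^m * (((Nat.factorial m : ℝ) / (Nat.factorial (2*m) : ℝ)) * Real.cosh (B*b)) := by
    intro m
    exact factor_bound (B^2) (B*b) (sq_nonneg B) m (by nlinarith [sq_nonneg B])
  have bC : ∀ m : ℕ, ‖iteratedFDeriv ℝ m (fun x : ℝ => E 0 (-(C^2) * x)) α‖ ≤
      (C^2)^m * (((Nat.factorial m : ℝ) / (Nat.factorial (2*m) : ℝ)) * Real.cosh (C*a)) := by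
    intro m
    rw [norm_iteratedFDeriv_eq_norm_iteratedDeriv, Real.norm_eq_abs, iteratedDeriv_E_scaled]
    have e : |(-(C^2))^m * ((-1:ℝ)^m * E m (-(C^2)*α))| = (C^2)^m * |E m (-(C^2)*α)| := by
      rw [abs_mul, abs_mul, abs_pow, abs_pow, abs_neg, abs_neg, abs_one, one_pow, one_mul,
        abs_of_nonneg (sq_nonneg C)]
    rw [e]
    exact mul_le_mul_of_nonneg_left (abs_E_le m (by nlinarith [sq_nonneg C])) (by positivity)
  rw [← Real.norm_eq_abs, ← norm_iteratedFDeriv_eq_norm_iteratedDeriv]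
  have step1 : ‖iteratedFDeriv ℝ n
      (fun x : ℝ => E 0 (A^2 * x) * E 0 (B^2 * x) * E 0 (-(C^2) * x)) α‖ ≤
      ∑ i ∈ range (n+1), (Nat.choose n i : ℝ) *
        ‖iteratedFDeriv ℝ i (fun x : ℝ => E 0 (A^2 * x) * E 0 (B^2 * x)) α‖ *
        ‖iteratedFDeriv ℝ (n-i) (fun x : ℝ => E 0 (-(C^2) * x)) α‖ :=
    norm_iteratedFDeriv_mul_le hfAB hfC α (hle n)
  have step2 : ∀ i : ℕ,
      ‖iteratedFDeriv ℝ i (fun x : ℝ => E 0 (A^2 * x) * E 0 (B^2 * x)) α‖ ≤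
      ∑ j ∈ range (i+1), (Nat.choose i j : ℝ) *
        ‖iteratedFDeriv ℝ j (fun x : ℝ => E 0 (A^2 * x)) α‖ *
        ‖iteratedFDeriv ℝ (i-j) (fun x : ℝ => E 0 (B^2 * x)) α‖ :=
    fun i => norm_iteratedFDeriv_mul_le hfA hfB α (hle i)
  calc ‖iteratedFDeriv ℝ n
        (fun x : ℝ => E 0 (A^2 * x) * E 0 (B^2 * x) * E 0 (-(C^2) * x)) α‖
      ≤ ∑ i ∈ range (n+1), (Nat.choose n i : ℝ) *
          ‖iteratedFDeriv ℝ i (fun x : ℝ => E 0 (A^2 * x) * E 0 (B^2 * x)) α‖ *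
          ‖iteratedFDeriv ℝ (n-i) (fun x : ℝ => E 0 (-(C^2) * x)) α‖ := step1
    _ ≤ ∑ i ∈ range (n+1), ∑ j ∈ range (i+1),
          (Nat.choose n i : ℝ) * (Nat.choose i j : ℝ) *
            ((A^2)^j * (((Nat.factorial j : ℝ) / (Nat.factorial (2*j) : ℝ)) * Real.cosh (A*b))) *
            ((B^2)^(i-j) * (((Nat.factorial (i-j) : ℝ) / (Nat.factorial (2*(i-j)) : ℝ)) *
              Real.cosh (B*b))) *
            ((C^2)^(n-i) * (((Nat.factorial (n-i) : ℝ) / (Nat.factorial (2*(n-i)) : ℝ)) *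
              Real.cosh (C*a))) := by
        apply Finset.sum_le_sum
        intro i _
        calc (Nat.choose n i : ℝ) *
              ‖iteratedFDeriv ℝ i (fun x : ℝ => E 0 (A^2 * x) * E 0 (B^2 * x)) α‖ *
              ‖iteratedFDeriv ℝ (n-i) (fun x : ℝ => E 0 (-(C^2) * x)) α‖
            ≤ (Nat.choose n i : ℝ) *
              (∑ j ∈ range (i+1), (Nat.choose i j : ℝ) *
                ‖iteratedFDeriv ℝ j (fun x : ℝ => E 0 (A^2 * x)) α‖ *
                ‖iteratedFDeriv ℝ (i-j) (fun x : ℝ => E 0 (B^2 * x)) α‖) *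
              ((C^2)^(n-i) * (((Nat.factorial (n-i) : ℝ) / (Nat.factorial (2*(n-i)) : ℝ)) *
                Real.cosh (C*a))) := by
              apply mul_le_mul
              · exact mul_le_mul_of_nonneg_left (step2 i) (by positivity)
              · exact bC (n-i)
              · exact norm_nonneg _
              · positivity
          _ = ∑ j ∈ range (i+1), (Nat.choose n i : ℝ) * ((Nat.choose i j : ℝ) *
                ‖iteratedFDeriv ℝ j (fun x : ℝ => E 0 (A^2 * x)) α‖ *
                ‖iteratedFDeriv ℝ (i-j) (fun x : ℝ => E 0 (B^2 * x)) α‖) *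
                ((C^2)^(n-i) * (((Nat.factorial (n-i) : ℝ) / (Nat.factorial (2*(n-i)) : ℝ)) *
                  Real.cosh (C*a))) := by
              rw [Finset.mul_sum, Finset.sum_mul]
          _ ≤ ∑ j ∈ range (i+1),
                (Nat.choose n i : ℝ) * (Nat.choose i j : ℝ) *
                  ((A^2)^j * (((Nat.factorial j : ℝ) / (Nat.factorial (2*j) : ℝ)) *
                    Real.cosh (A*b))) *
                  ((B^2)^(i-j) * (((Nat.factorial (i-j) : ℝ) / (Nat.factorial (2*(i-j)) : ℝ)) *
                    Real.cosh (B*b))) *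
                  ((C^2)^(n-i) * (((Nat.factorial (n-i) : ℝ) / (Nat.factorial (2*(n-i)) : ℝ)) *
                    Real.cosh (C*a))) := by
              apply Finset.sum_le_sum
              intro j _
              have e1 : (Nat.choose i j : ℝ) *
                  ‖iteratedFDeriv ℝ j (fun x : ℝ => E 0 (A^2 * x)) α‖ *
                  ‖iteratedFDeriv ℝ (i-j) (fun x : ℝ => E 0 (B^2 * x)) α‖ ≤
                  (Nat.choose i j : ℝ) *
                  ((A^2)^j * (((Nat.factorial j : ℝ) / (Nat.factorial (2*j) : ℝ)) *
                    Real.cosh (A*b))) *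
                  ((B^2)^(i-j) * (((Nat.factorial (i-j) : ℝ) / (Nat.factorial (2*(i-j)) : ℝ)) *
                    Real.cosh (B*b))) := by
                apply mul_le_mul
                · exact mul_le_mul_of_nonneg_left (bA j) (by positivity)
                · exact bB (i-j)
                · exact norm_nonneg _
                · positivity
              calc (Nat.choose n i : ℝ) * ((Nat.choose i j : ℝ) *
                    ‖iteratedFDeriv ℝ j (fun x : ℝ => E 0 (A^2 * x)) α‖ *
                    ‖iteratedFDeriv ℝ (i-j) (fun x : ℝ => E 0 (B^2 * x)) α‖) *
                    ((C^2)^(n-i) * (((Nat.factorial (n-i) : ℝ) / (Nat.factorial (2*(n-i)) : ℝ)) *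
                      Real.cosh (C*a)))
                  ≤ (Nat.choose n i : ℝ) * ((Nat.choose i j : ℝ) *
                      ((A^2)^j * (((Nat.factorial j : ℝ) / (Nat.factorial (2*j) : ℝ)) *
                        Real.cosh (A*b))) *
                      ((B^2)^(i-j) * (((Nat.factorial (i-j) : ℝ) /
                        (Nat.factorial (2*(i-j)) : ℝ)) * Real.cosh (B*b)))) *
                    ((C^2)^(n-i) * (((Nat.factorial (n-i) : ℝ) /
                      (Nat.factorial (2*(n-i)) : ℝ)) * Real.cosh (C*a))) := by
                    apply mul_le_mul_of_nonneg_right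
                      (mul_le_mul_of_nonneg_left e1 (by positivity)) (by positivity)
                _ = (Nat.choose n i : ℝ) * (Nat.choose i j : ℝ) *
                      ((A^2)^j * (((Nat.factorial j : ℝ) / (Nat.factorial (2*j) : ℝ)) *
                        Real.cosh (A*b))) *
                      ((B^2)^(i-j) * (((Nat.factorial (i-j) : ℝ) /
                        (Nat.factorial (2*(i-j)) : ℝ)) * Real.cosh (B*b))) *
                      ((C^2)^(n-i) * (((Nat.factorial (n-i) : ℝ) /
                        (Nat.factorial (2*(n-i)) : ℝ)) * Real.cosh (C*a))) := by ring
    _ = (∑ i ∈ range (n+1), ∑ j ∈ range (i+1),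
          (Nat.choose n i : ℝ) * (Nat.choose i j : ℝ) *
            (A^(2*j) * ((Nat.factorial j : ℝ) / (Nat.factorial (2*j) : ℝ))) *
            (B^(2*(i-j)) * ((Nat.factorial (i-j) : ℝ) / (Nat.factorial (2*(i-j)) : ℝ))) *
            (C^(2*(n-i)) * ((Nat.factorial (n-i) : ℝ) / (Nat.factorial (2*(n-i)) : ℝ)))) *
          Real.cosh (A*b) * Real.cosh (B*b) * Real.cosh (C*a) := by
        rw [Finset.sum_mul, Finset.sum_mul, Finset.sum_mul]
        apply Finset.sum_congr rfl
        intro i _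
        rw [Finset.sum_mul, Finset.sum_mul, Finset.sum_mul]
        apply Finset.sum_congr rfl
        intro j _
        rw [← pow_mul, ← pow_mul, ← pow_mul]
        ring
    _ ≤ ((Nat.factorial n : ℝ) * (A+B+C)^(2*n) / (Nat.factorial (2*n) : ℝ)) *
          Real.cosh (A*b) * Real.cosh (B*b) * Real.cosh (C*a) := by
        have hnum := numeric A B C hA hB hC n
        have c1 : (0:ℝ) ≤ Real.cosh (A*b) := (Real.cosh_pos _).le
        have c2 : (0:ℝ) ≤ Real.cosh (B*b) := (Real.cosh_pos _).le
        have c3 : (0:ℝ) ≤ Real.cosh (C*a) := (Real.cosh_pos _).le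
        apply mul_le_mul_of_nonneg_right _ c3
        apply mul_le_mul_of_nonneg_right _ c2
        exact mul_le_mul_of_nonneg_right hnum c1
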